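/- Let k ≥ 1, let φ_1, …, φ_k be real numbers and let b_1, …, b_k be complex numbers, and define c : ℝ → ℂ by c(t) = ∑_{j=1}^k b_j·exp(i·φ_j·t). Then for every ε > 0 the set of integer translation numbers {n ∈ ℤ : |c(x+n) − c(x)| ≤ ε for all x ∈ ℝ} is relatively dense in ℝ, i.e. there is K ≥ 0 such that every x ∈ ℝ is within distance K of some integer n with sup_{y∈ℝ} |c(y+n) − c(y)| ≤ ε. -/

import Mathlib

open Finset

lemma key (k : ℕ) (α : Fin k → ℝ) (δ : ℝ) (hδ : 0 < δ) :
    ∃ M : ℝ, 0 ≤ M ∧ ∀ x : ℝ, ∃ n : ℤ, |x - (n : ℝ)| ≤ M ∧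
      ∀ j, ∃ m : ℤ, |(n : ℝ) * α j - m| ≤ δ := by
  obtain ⟨B, hB1, hBδ⟩ : ∃ B : ℕ, 1 ≤ B ∧ 1 / (B : ℝ) ≤ δ := by
    refine ⟨⌈1/δ⌉₊, ?_, ?_⟩
    · exact Nat.one_le_ceil_iff.mpr (by positivity)
    · rw [div_le_iff₀ (by positivity)]
      calc (1:ℝ) = δ * (1/δ) := by field_simp
        _ ≤ δ * ⌈1/δ⌉₊ := by
            exact mul_le_mul_of_nonneg_left (Nat.le_ceil _) hδ.le
  have hB0 : (0:ℝ) < B := by exact_mod_cast hB1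
  -- box function
  have hbox : ∀ (n : ℤ) (j : Fin k), (⌊Int.fract ((n:ℝ) * α j) * B⌋).toNat < B := by
    intro n j
    have h1 : ⌊Int.fract ((n:ℝ) * α j) * B⌋ < (B:ℤ) := by
      apply Int.floor_lt.mpr
      push_cast
      have := Int.fract_lt_one ((n:ℝ) * α j)
      nlinarith
    omega
  set box : ℤ → (Fin k → Fin B) := fun n j => ⟨_, hbox n j⟩ with hboxdef
  classical
  set g : (Fin k → Fin B) → ℤ := fun v => if h : ∃ n : ℤ, box n = v then h.choose else 0 with hg
  set M0 : ℝ := ∑ v : Fin k → Fin B, |((g v : ℤ) : ℝ)| with hM0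
  have hM0nonneg : 0 ≤ M0 := Finset.sum_nonneg fun v _ => abs_nonneg _
  refine ⟨M0 + 1, by linarith, fun x => ?_⟩
  set m : ℤ := round x with hm
  have hex : ∃ n : ℤ, box n = box m := ⟨m, rfl⟩
  set r : ℤ := g (box m) with hr
  have hrbox : box r = box m := by
    rw [hr, hg]; simp only [dif_pos hex]; exact hex.choose_spec
  refine ⟨m - r, ?_, ?_⟩
  · have h1 : |x - (m:ℝ)| ≤ 1 := by
      have := abs_sub_round x
      rw [← hm] at this; linarith
    have h2 : |((r:ℤ):ℝ)| ≤ M0 := by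
      rw [hM0]
      exact Finset.single_le_sum (f := fun v => |((g v : ℤ) : ℝ)|)
        (fun v _ => abs_nonneg _) (Finset.mem_univ (box m))
    calc |x - ((m - r : ℤ):ℝ)| = |(x - m) + r| := by push_cast; ring_nf
      _ ≤ |x - (m:ℝ)| + |(r:ℝ)| := abs_add_le _ _
      _ ≤ 1 + M0 := add_le_add h1 h2
      _ = M0 + 1 := by ring
  · intro j
    refine ⟨⌊(m:ℝ) * α j⌋ - ⌊(r:ℝ) * α j⌋, ?_⟩
    have hfloor : ⌊Int.fract ((m:ℝ) * α j) * B⌋ = ⌊Int.fract ((r:ℝ) * α j) * B⌋ := by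
      have h2 : (⌊Int.fract ((r:ℝ) * α j) * B⌋).toNat
          = (⌊Int.fract ((m:ℝ) * α j) * B⌋).toNat := congrArg Fin.val (congrFun hrbox j)
      have hnn : ∀ (n : ℤ), 0 ≤ ⌊Int.fract ((n:ℝ) * α j) * B⌋ := fun n =>
        Int.floor_nonneg.mpr (mul_nonneg (Int.fract_nonneg _) hB0.le)
      have := hnn m; have := hnn r
      omega
    -- fract difference small
    have hfr : |Int.fract ((m:ℝ) * α j) - Int.fract ((r:ℝ) * α j)| ≤ δ := by
      set a := Int.fract ((m:ℝ) * α j)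
      set c := Int.fract ((r:ℝ) * α j)
      have h1 : (⌊a * B⌋ : ℝ) ≤ a * B := Int.floor_le _
      have h2 : a * B < ⌊a * B⌋ + 1 := Int.lt_floor_add_one _
      have h3 : (⌊c * B⌋ : ℝ) ≤ c * B := Int.floor_le _
      have h4 : c * B < ⌊c * B⌋ + 1 := Int.lt_floor_add_one _
      rw [hfloor] at h1 h2
      have h5 : |a * B - c * B| < 1 := by
        rw [abs_lt]; constructor <;> nlinarith
      have h6 : |a - c| * B < 1 := by
        calc |a - c| * B = |a - c| * |(B:ℝ)| := by rw [abs_of_nonneg hB0.le]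
          _ = |a * B - c * B| := by rw [← abs_mul]; ring_nf
          _ < 1 := h5
      have h7 : (1:ℝ) ≤ δ * B := by
        rw [div_le_iff₀ hB0] at hBδ; linarith
      have h8 : |a - c| * B < δ * B := lt_of_lt_of_le h6 h7
      exact (lt_of_mul_lt_mul_right h8 hB0.le).le
    have key : ((m - r : ℤ):ℝ) * α j - ((⌊(m:ℝ) * α j⌋ - ⌊(r:ℝ) * α j⌋ : ℤ):ℝ)
        = Int.fract ((m:ℝ) * α j) - Int.fract ((r:ℝ) * α j) := by
      rw [Int.fract, Int.fract]; push_cast; ring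
    rw [key]
    exact hfr

theorem statement3 (k : ℕ) (hk : 1 ≤ k) (φ : Fin k → ℝ) (b : Fin k → ℂ)
    (c : ℝ → ℂ)
    (hc : ∀ t : ℝ, c t = ∑ j, b j * Complex.exp (Complex.I * (φ j : ℂ) * (t : ℂ))) :
    ∀ ε : ℝ, 0 < ε → ∃ K : ℝ, 0 ≤ K ∧ ∀ x : ℝ, ∃ n : ℤ,
      |x - (n : ℝ)| ≤ K ∧ ∀ y : ℝ, ‖c (y + (n : ℝ)) - c y‖ ≤ ε := by
  intro ε hε
  have hπ := Real.pi_pos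
  set S : ℝ := ∑ j, ‖b j‖ with hS
  have hS0 : 0 ≤ S := Finset.sum_nonneg fun j _ => norm_nonneg _
  set δ : ℝ := min (ε / ((4 * Real.pi) * (S + 1))) (1 / (2 * Real.pi)) with hδdef
  have hδ : 0 < δ := lt_min (by positivity) (by positivity)
  obtain ⟨M, hM0, hM⟩ := key k (fun j => φ j / (2 * Real.pi)) δ hδ
  refine ⟨M, hM0, fun x => ?_⟩
  obtain ⟨n, hxn, hgood⟩ := hM x
  refine ⟨n, hxn, fun y => ?_⟩
  rw [hc, hc, ← Finset.sum_sub_distrib]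
  have hterm : ∀ j : Fin k,
      ‖b j * Complex.exp (Complex.I * (φ j : ℂ) * ((y + (n:ℝ) : ℝ) : ℂ))
        - b j * Complex.exp (Complex.I * (φ j : ℂ) * (y : ℂ))‖
      ≤ ‖b j‖ * (ε / (S + 1)) := by
    intro j
    obtain ⟨m, hm⟩ := hgood j
    set θ : ℝ := φ j * n - 2 * Real.pi * m with hθ
    have hθbound : |θ| ≤ 2 * Real.pi * δ := by
      have h1 : θ = 2 * Real.pi * ((n:ℝ) * (φ j / (2 * Real.pi)) - m) := by
        field_simp [hθ]; ring
      rw [h1, abs_mul, abs_of_pos (by positivity : (0:ℝ) < 2 * Real.pi)]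
      exact mul_le_mul_of_nonneg_left hm (by positivity)
    have hθ1 : |θ| ≤ 1 := by
      have h2 : 2 * Real.pi * δ ≤ 2 * Real.pi * (1 / (2 * Real.pi)) :=
        mul_le_mul_of_nonneg_left (min_le_right _ _) (by positivity)
      have h3 : 2 * Real.pi * (1 / (2 * Real.pi)) = 1 := by field_simp
      linarith
    have hsplit : Complex.exp (Complex.I * (φ j : ℂ) * ((y + (n:ℝ) : ℝ) : ℂ))
        = Complex.exp (Complex.I * (φ j : ℂ) * (y : ℂ)) * Complex.exp ((θ:ℂ) * Complex.I) := by
      have h1 : Complex.I * (φ j : ℂ) * ((y + (n:ℝ) : ℝ) : ℂ)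
          = Complex.I * (φ j : ℂ) * (y : ℂ) + ((θ:ℂ) * Complex.I + (m:ℂ) * (2 * Real.pi * Complex.I)) := by
        rw [hθ]; push_cast; ring
      rw [h1, Complex.exp_add, Complex.exp_add, Complex.exp_int_mul_two_pi_mul_I, mul_one]
    rw [hsplit]
    have hfactor : b j * (Complex.exp (Complex.I * (φ j : ℂ) * (y : ℂ)) * Complex.exp ((θ:ℂ) * Complex.I))
        - b j * Complex.exp (Complex.I * (φ j : ℂ) * (y : ℂ))
        = b j * Complex.exp (Complex.I * (φ j : ℂ) * (y : ℂ)) * (Complex.exp ((θ:ℂ) * Complex.I) - 1) := by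
      ring
    rw [hfactor, norm_mul, norm_mul]
    have habs1 : ‖Complex.exp (Complex.I * (φ j : ℂ) * (y : ℂ))‖ = 1 := by
      have : Complex.I * (φ j : ℂ) * (y : ℂ) = ((φ j * y : ℝ) : ℂ) * Complex.I := by
        push_cast; ring
      rw [this, Complex.norm_exp_ofReal_mul_I]
    rw [habs1, mul_one]
    have habsθ : ‖(θ:ℂ) * Complex.I‖ = |θ| := by
      rw [norm_mul, Complex.norm_I, Complex.norm_real, Real.norm_eq_abs, mul_one]
    have hexp : ‖Complex.exp ((θ:ℂ) * Complex.I) - 1‖ ≤ 2 * |θ| := by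
      have := Complex.norm_exp_sub_one_le (x := (θ:ℂ) * Complex.I) (by rw [habsθ]; exact hθ1)
      rwa [habsθ] at this
    have hfinal : 2 * |θ| ≤ ε / (S + 1) := by
      have h4 : 2 * Real.pi * δ ≤ 2 * Real.pi * (ε / ((4 * Real.pi) * (S + 1))) :=
        mul_le_mul_of_nonneg_left (min_le_left _ _) (by positivity)
      have h5 : 2 * (2 * Real.pi * (ε / ((4 * Real.pi) * (S + 1)))) = ε / (S + 1) := by
        field_simp; ring
      nlinarith [hθbound]
    calc ‖b j‖ * ‖Complex.exp ((θ:ℂ) * Complex.I) - 1‖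
        ≤ ‖b j‖ * (2 * |θ|) :=
          mul_le_mul_of_nonneg_left hexp (norm_nonneg _)
      _ ≤ ‖b j‖ * (ε / (S + 1)) :=
          mul_le_mul_of_nonneg_left hfinal (norm_nonneg _)
  calc ‖∑ j, (b j * Complex.exp (Complex.I * (φ j : ℂ) * ((y + (n:ℝ) : ℝ) : ℂ))
        - b j * Complex.exp (Complex.I * (φ j : ℂ) * (y : ℂ)))‖
      ≤ ∑ j, ‖b j * Complex.exp (Complex.I * (φ j : ℂ) * ((y + (n:ℝ) : ℝ) : ℂ))
        - b j * Complex.exp (Complex.I * (φ j : ℂ) * (y : ℂ))‖ :=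
        norm_sum_le _ _
    _ ≤ ∑ j, ‖b j‖ * (ε / (S + 1)) := Finset.sum_le_sum fun j _ => hterm j
    _ = S * (ε / (S + 1)) := by rw [← Finset.sum_mul]
    _ ≤ ε := by
        rw [div_eq_mul_inv]
        have h6 : S * (ε * (S + 1)⁻¹) * (S + 1) = ε * S := by field_simp
        nlinarith [mul_pos hε (by linarith : (0:ℝ) < S + 1)]
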